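/- arXiv:1104.5268 — 2 statements merged into one kernel-verified Lean document; each statement's English description precedes it below -/
import Mathlib

section
/- Let d ≥ 1 and b ≥ 1 be integers, let 𝔉 = {1,…,b}^d, and let G be an arbitrary subset of 𝔉. Let the interior surface ∂̇G be the set of points of G having an L1-neighbour (a point at L1-distance exactly 1) in 𝔉 \ G, and the exterior surface ∂G the set of points of 𝔉 \ G having an L1-neighbour in G. Consider the bipartite graph with parts ∂̇G and ∂G in which u ∈ ∂̇G is joined to v ∈ ∂G whenever ‖u − v‖₁ = 1. Then this bipartite graph contains a matching M with |M| ≥ |∂G|/(4d − 1). -/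
namespace Surface

/-- The discrete grid `{1,…,b}^d ⊂ ℤ^d`. -/
def grid (d b : ℕ) : Set (Fin d → ℤ) := {p | ∀ i, 1 ≤ p i ∧ p i ≤ (b : ℤ)}

/-- The `L¹` distance on `ℤ^d`. -/
def l1 {d : ℕ} (p q : Fin d → ℤ) : ℤ := ∑ i, |p i - q i|

/-- The exterior surface `∂G` of `G` inside the grid `{1,…,b}^d`: points of the grid
outside `G` at `L¹`-distance exactly `1` from some point of `G`. -/
def extSurf (d b : ℕ) (G : Set (Fin d → ℤ)) : Set (Fin d → ℤ) :=
  {v | v ∈ grid d b ∧ v ∉ G ∧ ∃ u ∈ G, l1 u v = 1}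

/-- The interior surface `∂̇G` of `G` inside the grid `{1,…,b}^d`: points of `G` at
`L¹`-distance exactly `1` from some point of the grid outside `G`. -/
def intSurf (d b : ℕ) (G : Set (Fin d → ℤ)) : Set (Fin d → ℤ) :=
  {u | u ∈ G ∧ ∃ v ∈ grid d b, v ∉ G ∧ l1 u v = 1}

end Surface

namespace Surface

/-- Greedy maximal matching lemma. -/
lemma matching_lemma {V : Type*} [DecidableEq V] (k : ℕ) (r : V → V → Prop)
    (N : V → Finset V) (hN : ∀ t s, r t s → s ∈ N t) (hNk : ∀ t, (N t).card ≤ k) :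
    ∀ S : Finset V, (∀ s ∈ S, ∃ t, r t s) →
      ∃ M : Finset (V × V), (∀ e ∈ M, r e.1 e.2 ∧ e.2 ∈ S) ∧
        (∀ e ∈ M, ∀ e' ∈ M, e ≠ e' → e.1 ≠ e'.1 ∧ e.2 ≠ e'.2) ∧
        S.card ≤ k * M.card := by
  classical
  intro S
  induction S using Finset.strongInduction with
  | _ S ih =>
    intro hcov
    rcases S.eq_empty_or_nonempty with hS | ⟨s₀, hs₀⟩
    · exact ⟨∅, by simp, by simp, by simp [hS]⟩
    obtain ⟨t₀, ht₀⟩ := hcov s₀ hs₀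
    set S' : Finset V := S.filter (fun s => ¬ r t₀ s) with hS'
    have hsub : S' ⊆ S := Finset.filter_subset _ _
    have hss : S' ⊂ S := by
      refine Finset.filter_ssubset.mpr ⟨s₀, hs₀, not_not.mpr ht₀⟩
    obtain ⟨M', hM1, hM2, hM3⟩ := ih S' hss (fun s hs => hcov s (hsub hs))
    have hnotmem : (t₀, s₀) ∉ M' := by
      intro hmem
      have := (hM1 _ hmem).2
      simp only [hS', Finset.mem_filter] at this
      exact this.2 ht₀
    refine ⟨insert (t₀, s₀) M', ?_, ?_, ?_⟩
    · intro e he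
      rcases Finset.mem_insert.mp he with rfl | he
      · exact ⟨ht₀, hs₀⟩
      · exact ⟨(hM1 e he).1, hsub (hM1 e he).2⟩
    · intro e he e' he' hne
      have key : ∀ f ∈ M', (t₀, s₀).1 ≠ f.1 ∧ (t₀, s₀).2 ≠ f.2 := by
        intro f hf
        have h2 := (hM1 f hf).2
        simp only [hS', Finset.mem_filter] at h2
        constructor
        · intro heq
          apply h2.2
          have heq' : t₀ = f.1 := heq
          rw [heq']
          exact (hM1 f hf).1
        · intro heq
          exact h2.2 (heq ▸ ht₀)
      rcases Finset.mem_insert.mp he with rfl | he <;>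
        rcases Finset.mem_insert.mp he' with h'' | he'
      · exact absurd h''.symm hne
      · exact key e' he'
      · subst h''
        exact ⟨(key e he).1.symm, (key e he).2.symm⟩
      · exact hM2 e he e' he' hne
    · have hcard : (insert (t₀, s₀) M').card = M'.card + 1 :=
        Finset.card_insert_of_notMem hnotmem
      have hsplit : (S.filter (fun s => r t₀ s)).card + S'.card = S.card := by
        simpa [hS'] using Finset.card_filter_add_card_filter_not
          (s := S) (p := fun s => r t₀ s)
      have hdeg : (S.filter (fun s => r t₀ s)).card ≤ k := by
        refine le_trans (Finset.card_le_card ?_) (hNk t₀)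
        intro s hs
        exact hN t₀ s (Finset.mem_filter.mp hs).2
      calc S.card = (S.filter (fun s => r t₀ s)).card + S'.card := hsplit.symm
        _ ≤ k + k * M'.card := add_le_add hdeg hM3
        _ = k * (M'.card + 1) := by ring
        _ = k * (insert (t₀, s₀) M').card := by rw [hcard]

lemma l1_eq_one {d : ℕ} {u v : Fin d → ℤ} (h : l1 u v = 1) :
    ∃ i : Fin d, ∃ ε : ℤ, (ε = 1 ∨ ε = -1) ∧ v = Function.update u i (u i + ε) := by
  classical
  have hnn : ∀ j : Fin d, (0:ℤ) ≤ |u j - v j| := fun j => abs_nonneg _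
  have hex : ∃ i : Fin d, |u i - v i| ≠ 0 := by
    by_contra hc
    push_neg at hc
    have : l1 u v = 0 := Finset.sum_eq_zero (fun j _ => hc j)
    omega
  obtain ⟨i, hi⟩ := hex
  have h1 : 1 ≤ |u i - v i| := by
    rcases (hnn i).lt_or_eq with hlt | heq
    · omega
    · exact absurd heq.symm hi
  have hle : |u i - v i| ≤ 1 := by
    have := Finset.single_le_sum (f := fun j => |u j - v j|) (fun j _ => hnn j)
      (Finset.mem_univ i)
    rw [show (∑ j, |u j - v j|) = 1 from h] at this
    exact this
  have heq1 : |u i - v i| = 1 := le_antisymm hle h1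
  have hrest : ∑ j ∈ Finset.univ.erase i, |u j - v j| = 0 := by
    have := Finset.add_sum_erase Finset.univ (fun j => |u j - v j|) (Finset.mem_univ i)
    have hl1 : |u i - v i| + ∑ j ∈ Finset.univ.erase i, |u j - v j| = 1 := by
      rw [this]; exact h
    omega
  have hzero : ∀ j ∈ Finset.univ.erase i, |u j - v j| = 0 :=
    (Finset.sum_eq_zero_iff_of_nonneg (fun j _ => hnn j)).mp hrest
  refine ⟨i, v i - u i, ?_, ?_⟩
  · rcases abs_eq (by norm_num : (0:ℤ) ≤ 1) |>.mp heq1 with h' | h' <;> omega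
  · funext j
    by_cases hj : j = i
    · subst hj; simp
    · have : |u j - v j| = 0 := hzero j (Finset.mem_erase.mpr ⟨hj, Finset.mem_univ j⟩)
      have : u j = v j := by
        have := abs_eq_zero.mp this; omega
      rw [Function.update_of_ne hj]
      omega

/-- Lemma 32 of the paper.
For any `G ⊆ {1,…,b}^d`, the bipartite graph between the interior surface `∂̇G` and
the exterior surface `∂G`, with edges given by pairs at `L¹`-distance `1`, contains a
matching `M` with `|M| ≥ |∂G|/(4d - 1)`. -/
theorem statement17 :
    ∀ d b : ℕ, 1 ≤ d → 1 ≤ b → ∀ G : Set (Fin d → ℤ), G ⊆ grid d b →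
      ∃ M : Set ((Fin d → ℤ) × (Fin d → ℤ)), M.Finite ∧
        (∀ e ∈ M, e.1 ∈ intSurf d b G ∧ e.2 ∈ extSurf d b G ∧ l1 e.1 e.2 = 1) ∧
        (∀ e ∈ M, ∀ e' ∈ M, e ≠ e' → e.1 ≠ e'.1 ∧ e.2 ≠ e'.2) ∧
        ((extSurf d b G).ncard : ℝ) ≤ (4 * (d : ℝ) - 1) * (M.ncard : ℝ) := by
  classical
  intro d b hd hb G hG
  -- Finset version of the exterior surface
  set F : Finset (Fin d → ℤ) := Fintype.piFinset (fun _ : Fin d => Finset.Icc (1:ℤ) (b:ℤ))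
    with hF
  set S : Finset (Fin d → ℤ) := F.filter (fun s => s ∈ extSurf d b G) with hSdef
  have hSmem : ∀ s, s ∈ S ↔ s ∈ extSurf d b G := by
    intro s
    simp only [hSdef, Finset.mem_filter, hF, Fintype.mem_piFinset, Finset.mem_Icc]
    constructor
    · exact fun h => h.2
    · intro h
      exact ⟨fun i => h.1 i, h⟩
  -- the neighbourhood finset
  set N : (Fin d → ℤ) → Finset (Fin d → ℤ) := fun t =>
    ((Finset.univ : Finset (Fin d)) ×ˢ ({-1, 1} : Finset ℤ)).image
      (fun p => Function.update t p.1 (t p.1 + p.2)) with hNdef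
  have hN : ∀ t s : Fin d → ℤ, (t ∈ G ∧ l1 t s = 1) → s ∈ N t := by
    intro t s ⟨_, hts⟩
    obtain ⟨i, ε, hε, hs⟩ := l1_eq_one hts
    simp only [hNdef, Finset.mem_image, Finset.mem_product]
    refine ⟨(i, ε), ⟨Finset.mem_univ i, ?_⟩, hs.symm⟩
    rcases hε with rfl | rfl <;> simp
  have hNk : ∀ t, (N t).card ≤ 2 * d := by
    intro t
    calc (N t).card ≤ ((Finset.univ : Finset (Fin d)) ×ˢ ({-1, 1} : Finset ℤ)).card :=
        Finset.card_image_le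
      _ ≤ d * 2 := by
        rw [Finset.card_product, Finset.card_univ, Fintype.card_fin]
        exact Nat.mul_le_mul_left d (by simp)
      _ = 2 * d := by ring
  have hcov : ∀ s ∈ S, ∃ t, t ∈ G ∧ l1 t s = 1 := by
    intro s hs
    obtain ⟨_, _, u, hu, hl⟩ := (hSmem s).mp hs
    exact ⟨u, hu, hl⟩
  obtain ⟨M, hM1, hM2, hM3⟩ := matching_lemma (2 * d)
    (fun t s => t ∈ G ∧ l1 t s = 1) N hN hNk S hcov
  refine ⟨(↑M : Set _), M.finite_toSet, ?_, ?_, ?_⟩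
  · intro e he
    obtain ⟨⟨heG, hel⟩, heS⟩ := hM1 e (he : e ∈ M)
    have heExt : e.2 ∈ extSurf d b G := (hSmem e.2).mp heS
    refine ⟨⟨heG, e.2, heExt.1, heExt.2.1, hel⟩, heExt, hel⟩
  · intro e he e' he' hne
    exact hM2 e he e' he' hne
  · have hset : extSurf d b G = (↑S : Set _) := by
      ext s; simp [hSmem s]
    rw [hset, Set.ncard_coe_finset, Set.ncard_coe_finset]
    have h1 : (S.card : ℝ) ≤ (2 * d : ℕ) * (M.card : ℝ) := by
      exact_mod_cast hM3
    have hd1 : (1 : ℝ) ≤ (d : ℝ) := by exact_mod_cast hd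
    have h2 : ((2 * d : ℕ) : ℝ) ≤ 4 * (d : ℝ) - 1 := by
      push_cast; linarith
    have hMnn : (0 : ℝ) ≤ (M.card : ℝ) := Nat.cast_nonneg _
    nlinarith

end Surface
end

section
/- Let b ≥ 1 be an integer and let G be an arbitrary subset of {1,…,b}². If |G| ≤ (2/3)·b², then the exterior surface of G satisfies |∂G| ≥ (2/5)·|G|^(1/2). -/
namespace Surface

/-- A 2D point from coordinates. -/
def pt (x y : ℤ) : Fin 2 → ℤ := ![x, y]

@[simp] lemma pt_zero (x y : ℤ) : pt x y 0 = x := rfl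
@[simp] lemma pt_one (x y : ℤ) : pt x y 1 = y := rfl

lemma eq_pt (p : Fin 2 → ℤ) : p = pt (p 0) (p 1) := by
  funext i; fin_cases i <;> rfl

lemma pt_injective : Function.Injective (fun q : ℤ × ℤ => pt q.1 q.2) := by
  rintro ⟨a, c⟩ ⟨a', c'⟩ h
  have h0 := congrFun h 0
  have h1 := congrFun h 1
  simp [pt] at h0 h1
  simp [h0, h1]

lemma l1_vert (x y : ℤ) : l1 (pt x y) (pt x (y + 1)) = 1 := by
  have : y - (y + 1) = -1 := by ring
  simp [l1, Fin.sum_univ_two, pt, this]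

lemma l1_horiz (x y : ℤ) : l1 (pt x y) (pt (x + 1) y) = 1 := by
  have : x - (x + 1) = -1 := by ring
  simp [l1, Fin.sum_univ_two, pt, this]

lemma mem_grid_pt {b : ℕ} {x y : ℤ} (hx1 : 1 ≤ x) (hx2 : x ≤ (b : ℤ))
    (hy1 : 1 ≤ y) (hy2 : y ≤ (b : ℤ)) : pt x y ∈ grid 2 b := by
  intro i; fin_cases i <;> simp [pt] <;> omega

/-- Discrete intermediate value: between a point where `P` holds and one where it
fails there is an adjacent flip. -/
lemma ivt (P : ℤ → Prop) (a c : ℤ) (ha : P a) (hc : ¬ P c) :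
    ∃ y, min a c ≤ y ∧ y + 1 ≤ max a c ∧
      ((P y ∧ ¬ P (y + 1)) ∨ (¬ P y ∧ P (y + 1))) := by
  classical
  rcases lt_trichotomy a c with h | h | h
  · obtain ⟨m, hm, hmin⟩ := Int.exists_least_of_bdd (P := fun n => a ≤ n ∧ ¬ P n)
      ⟨a, fun z hz => hz.1⟩ ⟨c, h.le, hc⟩
    have hma : a < m := lt_of_le_of_ne hm.1 (by rintro rfl; exact hm.2 ha)
    have hmc : m ≤ c := hmin c ⟨h.le, hc⟩
    refine ⟨m - 1, ?_, ?_, Or.inl ⟨?_, by simpa using hm.2⟩⟩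
    · rw [min_eq_left h.le]; omega
    · rw [max_eq_right h.le]; omega
    · by_contra hP
      have := hmin (m - 1) ⟨by omega, hP⟩; omega
  · exact absurd (h ▸ ha) hc
  · obtain ⟨m, hm, hmax⟩ := Int.exists_greatest_of_bdd (P := fun n => n ≤ a ∧ ¬ P n)
      ⟨a, fun z hz => hz.1⟩ ⟨c, h.le, hc⟩
    have hma : m < a := lt_of_le_of_ne hm.1 (by rintro rfl; exact hm.2 ha)
    have hmc : c ≤ m := hmax c ⟨h.le, hc⟩
    refine ⟨m, ?_, ?_, Or.inr ⟨hm.2, ?_⟩⟩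
    · rw [min_eq_right h.le]; omega
    · rw [max_eq_left h.le]; omega
    · by_contra hP
      have := hmax (m + 1) ⟨by omega, hP⟩; omega

/-- A column that meets `G` but is not fully contained in `G` contains a point of
the exterior surface. -/
lemma colB {b : ℕ} {G : Set (Fin 2 → ℤ)} (hG : G ⊆ grid 2 b) {x : ℤ}
    (h1 : ∃ p ∈ G, p 0 = x) (h2 : ∃ y, 1 ≤ y ∧ y ≤ (b : ℤ) ∧ pt x y ∉ G) :
    ∃ v ∈ extSurf 2 b G, v 0 = x := by
  obtain ⟨p, hp, hpx⟩ := h1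
  obtain ⟨y₂, hy₂1, hy₂b, hy₂G⟩ := h2
  have hpg := hG hp
  have hp1 : pt x (p 1) ∈ G := by
    have h : pt x (p 1) = p := by rw [← hpx]; exact (eq_pt p).symm
    rwa [h]
  obtain ⟨y, hy1, hy2, hcase⟩ := ivt (fun y => pt x y ∈ G) (p 1) y₂ hp1 hy₂G
  have hb1 : 1 ≤ p 1 := (hpg 1).1
  have hb2 : p 1 ≤ (b : ℤ) := (hpg 1).2
  have hx1 : 1 ≤ x := hpx ▸ (hpg 0).1
  have hx2 : x ≤ (b : ℤ) := hpx ▸ (hpg 0).2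
  have hylo : 1 ≤ y := le_trans (le_min hb1 hy₂1) hy1
  have hyhi : y + 1 ≤ (b : ℤ) := le_trans hy2 (max_le hb2 hy₂b)
  rcases hcase with ⟨hin, hout⟩ | ⟨hout, hin⟩
  · exact ⟨pt x (y + 1), ⟨mem_grid_pt hx1 hx2 (by omega) hyhi, hout,
      pt x y, hin, l1_vert x y⟩, rfl⟩
  · exact ⟨pt x y, ⟨mem_grid_pt hx1 hx2 hylo (by omega), hout,
      pt x (y + 1), hin, by
        have : l1 (pt x (y + 1)) (pt x y) = 1 := by
          have h : (y + 1) - y = 1 := by ring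
          simp [l1, Fin.sum_univ_two, pt, h]
        exact this⟩, rfl⟩

/-- A row that meets `G` but is not fully contained in `G` contains a point of the
exterior surface. -/
lemma rowB {b : ℕ} {G : Set (Fin 2 → ℤ)} (hG : G ⊆ grid 2 b) {y : ℤ}
    (h1 : ∃ p ∈ G, p 1 = y) (h2 : ∃ x, 1 ≤ x ∧ x ≤ (b : ℤ) ∧ pt x y ∉ G) :
    ∃ v ∈ extSurf 2 b G, v 1 = y := by
  obtain ⟨p, hp, hpy⟩ := h1
  obtain ⟨x₂, hx₂1, hx₂b, hx₂G⟩ := h2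
  have hpg := hG hp
  have hp1 : pt (p 0) y ∈ G := by
    have h : pt (p 0) y = p := by rw [← hpy]; exact (eq_pt p).symm
    rwa [h]
  obtain ⟨x, hx1, hx2, hcase⟩ := ivt (fun x => pt x y ∈ G) (p 0) x₂ hp1 hx₂G
  have hb1 : 1 ≤ p 0 := (hpg 0).1
  have hb2 : p 0 ≤ (b : ℤ) := (hpg 0).2
  have hy1 : 1 ≤ y := hpy ▸ (hpg 1).1
  have hy2 : y ≤ (b : ℤ) := hpy ▸ (hpg 1).2
  have hxlo : 1 ≤ x := le_trans (le_min hb1 hx₂1) hx1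
  have hxhi : x + 1 ≤ (b : ℤ) := le_trans hx2 (max_le hb2 hx₂b)
  rcases hcase with ⟨hin, hout⟩ | ⟨hout, hin⟩
  · exact ⟨pt (x + 1) y, ⟨mem_grid_pt (by omega) hxhi hy1 hy2, hout,
      pt x y, hin, l1_horiz x y⟩, rfl⟩
  · exact ⟨pt x y, ⟨mem_grid_pt hxlo (by omega) hy1 hy2, hout,
      pt (x + 1) y, hin, by
        have h : (x + 1) - x = 1 := by ring
        simp [l1, Fin.sum_univ_two, pt, h]⟩, rfl⟩

lemma gridFinite (d b : ℕ) : (grid d b).Finite := by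
  refine Set.Finite.subset (Set.Finite.pi (t := fun _ : Fin d => Set.Icc (1 : ℤ) b)
    (fun _ => Set.finite_Icc _ _)) ?_
  intro p hp
  simp only [Set.mem_pi, Set.mem_univ, Set.mem_Icc]
  exact fun i _ => hp i

/-- If every element of `S` is the `i`-th coordinate of some point of `T`, then
`S` is at most as large as `T`. -/
lemma count_le {S : Set ℤ} {T : Set (Fin 2 → ℤ)} (i : Fin 2) (hT : T.Finite)
    (h : ∀ x ∈ S, ∃ v ∈ T, v i = x) : S.ncard ≤ T.ncard := by
  classical
  have h' : ∀ x : ℤ, ∃ v, x ∈ S → v ∈ T ∧ v i = x := by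
    intro x
    by_cases hx : x ∈ S
    · obtain ⟨v, hv1, hv2⟩ := h x hx
      exact ⟨v, fun _ => ⟨hv1, hv2⟩⟩
    · exact ⟨pt 0 0, fun hh => absurd hh hx⟩
  choose f hf using h'
  refine Set.ncard_le_ncard_of_injOn f (fun x hx => (hf x hx).1) ?_ hT
  intro x hx x' hx' hxx
  rw [← (hf x hx).2, ← (hf x' hx').2, hxx]

lemma ncard_sprod (s t : Set ℤ) : (s ×ˢ t).ncard = s.ncard * t.ncard := by
  rw [← Nat.card_coe_set_eq, Nat.card_congr (Equiv.Set.prod s t), Nat.card_prod,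
    Nat.card_coe_set_eq, Nat.card_coe_set_eq]

lemma Icc_ncard (b : ℕ) : (Set.Icc (1 : ℤ) (b : ℤ)).ncard = b := by
  rw [← Finset.coe_Icc, Set.ncard_coe_finset, Int.card_Icc]
  omega

/-- Lemma 34 of the paper: isoperimetry in the discrete square.
Every `G ⊆ {1,…,b}²` with `|G| ≤ (2/3)·b²` satisfies `|∂G| ≥ (2/5)·|G|^(1/2)`. -/
theorem statement19 :
    ∀ b : ℕ, 1 ≤ b → ∀ G : Set (Fin 2 → ℤ), G ⊆ grid 2 b →
      (G.ncard : ℝ) ≤ 2 / 3 * (b : ℝ) ^ 2 →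
      2 / 5 * Real.sqrt (G.ncard : ℝ) ≤ ((extSurf 2 b G).ncard : ℝ) := by
  intro b hb G hsub hcard
  classical
  have hbR : (1 : ℝ) ≤ (b : ℝ) := by exact_mod_cast hb
  have hgridfin : (grid 2 b).Finite := gridFinite 2 b
  have hGfin : G.Finite := hgridfin.subset hsub
  have hEfin : (extSurf 2 b G).Finite := hgridfin.subset (fun v hv => hv.1)
  have hsqnn : (0 : ℝ) ≤ Real.sqrt (G.ncard : ℝ) := Real.sqrt_nonneg _
  -- the full-line cases
  by_cases hfc : ∃ x, ∀ y, 1 ≤ y → y ≤ (b : ℤ) → pt x y ∈ G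
  · -- a full column exists: count non-full rows
    obtain ⟨x₀, hx₀⟩ := hfc
    have hx₀b : 1 ≤ x₀ ∧ x₀ ≤ (b : ℤ) := by
      have h1 : (1:ℤ) ≤ (b:ℤ) := by exact_mod_cast hb
      have := hsub (hx₀ 1 (le_refl 1) h1)
      exact ⟨(this 0).1, (this 0).2⟩
    set NF : Set ℤ := {y : ℤ | 1 ≤ y ∧ y ≤ (b : ℤ) ∧ ∃ x, 1 ≤ x ∧ x ≤ (b : ℤ) ∧ pt x y ∉ G}
      with hNFdef
    set F : Set ℤ := {y : ℤ | 1 ≤ y ∧ y ≤ (b : ℤ) ∧ ∀ x, 1 ≤ x → x ≤ (b : ℤ) → pt x y ∈ G}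
      with hFdef
    have hIccfin : (Set.Icc (1 : ℤ) (b : ℤ)).Finite := Set.finite_Icc _ _
    have hNFsub : NF ⊆ Set.Icc (1 : ℤ) (b : ℤ) := fun y hy => ⟨hy.1, hy.2.1⟩
    have hFsub : F ⊆ Set.Icc (1 : ℤ) (b : ℤ) := fun y hy => ⟨hy.1, hy.2.1⟩
    have hNF : NF.ncard ≤ (extSurf 2 b G).ncard := by
      refine count_le 1 hEfin ?_
      rintro y ⟨hy1, hy2, x, hx1, hx2, hxo⟩
      exact rowB hsub ⟨pt x₀ y, hx₀ y hy1 hy2, rfl⟩ ⟨x, hx1, hx2, hxo⟩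
    have hdisj : Disjoint NF F := by
      rw [Set.disjoint_left]
      rintro y ⟨_, _, x, hx1, hx2, hxo⟩ ⟨_, _, hfull⟩
      exact hxo (hfull x hx1 hx2)
    have hunion : NF ∪ F = Set.Icc (1 : ℤ) (b : ℤ) := by
      apply Set.Subset.antisymm (Set.union_subset hNFsub hFsub)
      intro y hy
      by_cases hfull : ∀ x, 1 ≤ x → x ≤ (b : ℤ) → pt x y ∈ G
      · exact Or.inr ⟨hy.1, hy.2, hfull⟩
      · push_neg at hfull
        obtain ⟨x, hx1, hx2, hxo⟩ := hfull
        exact Or.inl ⟨hy.1, hy.2, x, hx1, hx2, hxo⟩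
    have hcount : NF.ncard + F.ncard = b := by
      rw [← Set.ncard_union_eq hdisj (hIccfin.subset hNFsub) (hIccfin.subset hFsub),
        hunion, Icc_ncard]
    -- full rows contribute `b` points each
    have hFb : F.ncard * b ≤ G.ncard := by
      have hSsub : (fun q : ℤ × ℤ => pt q.1 q.2) '' (Set.Icc (1 : ℤ) (b : ℤ) ×ˢ F) ⊆ G := by
        rintro _ ⟨⟨x, y⟩, ⟨hxI, hyF⟩, rfl⟩
        exact hyF.2.2 x hxI.1 hxI.2
      calc F.ncard * b = ((fun q : ℤ × ℤ => pt q.1 q.2) ''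
            (Set.Icc (1 : ℤ) (b : ℤ) ×ˢ F)).ncard := by
            rw [Set.ncard_image_of_injective _ pt_injective, ncard_sprod, Icc_ncard,
              Nat.mul_comm]
        _ ≤ G.ncard := Set.ncard_le_ncard hSsub hGfin
    -- arithmetic
    have h1 : (NF.ncard : ℝ) + (F.ncard : ℝ) = (b : ℝ) := by exact_mod_cast hcount
    have h2 : (F.ncard : ℝ) * (b : ℝ) ≤ (G.ncard : ℝ) := by exact_mod_cast hFb
    have h3 : (NF.ncard : ℝ) ≤ ((extSurf 2 b G).ncard : ℝ) := by exact_mod_cast hNF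
    have hbpos : (0 : ℝ) < (b : ℝ) := by linarith
    have hFle : (F.ncard : ℝ) ≤ 2 / 3 * (b : ℝ) := by
      nlinarith
    have hsq : Real.sqrt (G.ncard : ℝ) ≤ 5 / 6 * (b : ℝ) := by
      have : (G.ncard : ℝ) ≤ (5 / 6 * (b : ℝ)) ^ 2 := by nlinarith
      calc Real.sqrt (G.ncard : ℝ) ≤ Real.sqrt ((5 / 6 * (b : ℝ)) ^ 2) :=
            Real.sqrt_le_sqrt this
        _ = 5 / 6 * (b : ℝ) := Real.sqrt_sq (by positivity)
    linarith
  by_cases hfr : ∃ y, ∀ x, 1 ≤ x → x ≤ (b : ℤ) → pt x y ∈ G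
  · -- a full row exists: count non-full columns
    obtain ⟨y₀, hy₀⟩ := hfr
    have hy₀b : 1 ≤ y₀ ∧ y₀ ≤ (b : ℤ) := by
      have h1 : (1:ℤ) ≤ (b:ℤ) := by exact_mod_cast hb
      have := hsub (hy₀ 1 (le_refl 1) h1)
      exact ⟨(this 1).1, (this 1).2⟩
    set NF : Set ℤ := {x : ℤ | 1 ≤ x ∧ x ≤ (b : ℤ) ∧ ∃ y, 1 ≤ y ∧ y ≤ (b : ℤ) ∧ pt x y ∉ G}
      with hNFdef
    set F : Set ℤ := {x : ℤ | 1 ≤ x ∧ x ≤ (b : ℤ) ∧ ∀ y, 1 ≤ y → y ≤ (b : ℤ) → pt x y ∈ G}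
      with hFdef
    have hIccfin : (Set.Icc (1 : ℤ) (b : ℤ)).Finite := Set.finite_Icc _ _
    have hNFsub : NF ⊆ Set.Icc (1 : ℤ) (b : ℤ) := fun x hx => ⟨hx.1, hx.2.1⟩
    have hFsub : F ⊆ Set.Icc (1 : ℤ) (b : ℤ) := fun x hx => ⟨hx.1, hx.2.1⟩
    have hNF : NF.ncard ≤ (extSurf 2 b G).ncard := by
      refine count_le 0 hEfin ?_
      rintro x ⟨hx1, hx2, y, hy1, hy2, hyo⟩
      exact colB hsub ⟨pt x y₀, hy₀ x hx1 hx2, rfl⟩ ⟨y, hy1, hy2, hyo⟩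
    have hdisj : Disjoint NF F := by
      rw [Set.disjoint_left]
      rintro x ⟨_, _, y, hy1, hy2, hyo⟩ ⟨_, _, hfull⟩
      exact hyo (hfull y hy1 hy2)
    have hunion : NF ∪ F = Set.Icc (1 : ℤ) (b : ℤ) := by
      apply Set.Subset.antisymm (Set.union_subset hNFsub hFsub)
      intro x hx
      by_cases hfull : ∀ y, 1 ≤ y → y ≤ (b : ℤ) → pt x y ∈ G
      · exact Or.inr ⟨hx.1, hx.2, hfull⟩
      · push_neg at hfull
        obtain ⟨y, hy1, hy2, hyo⟩ := hfull
        exact Or.inl ⟨hx.1, hx.2, y, hy1, hy2, hyo⟩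
    have hcount : NF.ncard + F.ncard = b := by
      rw [← Set.ncard_union_eq hdisj (hIccfin.subset hNFsub) (hIccfin.subset hFsub),
        hunion, Icc_ncard]
    have hFb : F.ncard * b ≤ G.ncard := by
      have hSsub : (fun q : ℤ × ℤ => pt q.1 q.2) '' (F ×ˢ Set.Icc (1 : ℤ) (b : ℤ)) ⊆ G := by
        rintro _ ⟨⟨x, y⟩, ⟨hxF, hyI⟩, rfl⟩
        exact hxF.2.2 y hyI.1 hyI.2
      calc F.ncard * b = ((fun q : ℤ × ℤ => pt q.1 q.2) ''
            (F ×ˢ Set.Icc (1 : ℤ) (b : ℤ))).ncard := by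
            rw [Set.ncard_image_of_injective _ pt_injective, ncard_sprod, Icc_ncard]
        _ ≤ G.ncard := Set.ncard_le_ncard hSsub hGfin
    have h1 : (NF.ncard : ℝ) + (F.ncard : ℝ) = (b : ℝ) := by exact_mod_cast hcount
    have h2 : (F.ncard : ℝ) * (b : ℝ) ≤ (G.ncard : ℝ) := by exact_mod_cast hFb
    have h3 : (NF.ncard : ℝ) ≤ ((extSurf 2 b G).ncard : ℝ) := by exact_mod_cast hNF
    have hbpos : (0 : ℝ) < (b : ℝ) := by linarith
    have hFle : (F.ncard : ℝ) ≤ 2 / 3 * (b : ℝ) := by nlinarith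
    have hsq : Real.sqrt (G.ncard : ℝ) ≤ 5 / 6 * (b : ℝ) := by
      have : (G.ncard : ℝ) ≤ (5 / 6 * (b : ℝ)) ^ 2 := by nlinarith
      calc Real.sqrt (G.ncard : ℝ) ≤ Real.sqrt ((5 / 6 * (b : ℝ)) ^ 2) :=
            Real.sqrt_le_sqrt this
        _ = 5 / 6 * (b : ℝ) := Real.sqrt_sq (by positivity)
    linarith
  -- no full line at all
  push_neg at hfc hfr
  set C : Set ℤ := (fun p : Fin 2 → ℤ => p 0) '' G with hCdef
  set R : Set ℤ := (fun p : Fin 2 → ℤ => p 1) '' G with hRdef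
  have hC : C.ncard ≤ (extSurf 2 b G).ncard := by
    refine count_le 0 hEfin ?_
    rintro x ⟨p, hp, rfl⟩
    exact colB hsub ⟨p, hp, rfl⟩ (hfc (p 0))
  have hR : R.ncard ≤ (extSurf 2 b G).ncard := by
    refine count_le 1 hEfin ?_
    rintro y ⟨p, hp, rfl⟩
    exact rowB hsub ⟨p, hp, rfl⟩ (hfr (p 1))
  have hCR : G.ncard ≤ C.ncard * R.ncard := by
    have hCfin : C.Finite := hGfin.image _
    have hRfin : R.Finite := hGfin.image _
    have := Set.ncard_le_ncard_of_injOn (fun p : Fin 2 → ℤ => (p 0, p 1))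
      (s := G) (t := C ×ˢ R)
      (fun p hp => ⟨⟨p, hp, rfl⟩, ⟨p, hp, rfl⟩⟩)
      (by
        intro p hp q hq hpq
        simp only [Prod.mk.injEq] at hpq
        rw [eq_pt p, eq_pt q, hpq.1, hpq.2])
      (hCfin.prod hRfin)
    rwa [ncard_sprod] at this
  -- arithmetic
  have h1 : (G.ncard : ℝ) ≤ (C.ncard : ℝ) * (R.ncard : ℝ) := by exact_mod_cast hCR
  have h2 : (C.ncard : ℝ) ≤ ((extSurf 2 b G).ncard : ℝ) := by exact_mod_cast hC
  have h3 : (R.ncard : ℝ) ≤ ((extSurf 2 b G).ncard : ℝ) := by exact_mod_cast hR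
  have hCnn : (0 : ℝ) ≤ (C.ncard : ℝ) := Nat.cast_nonneg _
  have hRnn : (0 : ℝ) ≤ (R.ncard : ℝ) := Nat.cast_nonneg _
  have hEnn : (0 : ℝ) ≤ ((extSurf 2 b G).ncard : ℝ) := Nat.cast_nonneg _
  have hsq : Real.sqrt (G.ncard : ℝ) ≤ ((extSurf 2 b G).ncard : ℝ) := by
    have hle : (G.ncard : ℝ) ≤ ((extSurf 2 b G).ncard : ℝ) ^ 2 := by nlinarith
    calc Real.sqrt (G.ncard : ℝ) ≤ Real.sqrt (((extSurf 2 b G).ncard : ℝ) ^ 2) :=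
          Real.sqrt_le_sqrt hle
      _ = ((extSurf 2 b G).ncard : ℝ) := Real.sqrt_sq hEnn
  linarith

end Surface
end
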